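/- Let t be a labeled tree on vertex set {1,...,n}. Then for every permutation π of the edges of t, the product of the transpositions corresponding to the edges of t taken in the order π is an n-cycle in Sₙ. -/

import Mathlib

set_option linter.unusedSectionVars false
set_option maxHeartbeats 1000000

open Finset Equiv

/-- The ordered product `τ_m ⋯ τ_1` of a sequence of permutations. -/
def prodRev {n m : ℕ} (τ : Fin m → Equiv.Perm (Fin n)) : Equiv.Perm (Fin n) :=
  (List.ofFn τ).reverse.prod

/-- `σ` is an `n`-cycle of `Sₙ`. -/
def IsNCycle {n : ℕ} (σ : Equiv.Perm (Fin n)) : Prop :=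
  σ.IsCycle ∧ σ.support = univ

/-- The transposition associated to an unordered pair. -/
def sym2Swap {n : ℕ} : Sym2 (Fin n) → Equiv.Perm (Fin n) :=
  Sym2.lift ⟨fun a b => Equiv.swap a b, fun a b => Equiv.swap_comm a b⟩

namespace TreeCycleAux

open Equiv Equiv.Perm

variable {α : Type*} [Fintype α] [DecidableEq α]

/-- If `a`'s σ-orbit avoids `x` and `y`, the swap doesn't affect iterates. -/
lemma untouched (σ : Perm α) (x y a : α) (h1 : ¬σ.SameCycle a x) (h2 : ¬σ.SameCycle a y) :
    ∀ k : ℕ, ((Equiv.swap x y * σ) ^ k) a = (σ ^ k) a := by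
  intro k
  induction k with
  | zero => simp
  | succ k ih =>
    rw [pow_succ', pow_succ', mul_apply, mul_apply, ih, mul_apply]
    have hx : σ ((σ ^ k) a) ≠ x := by
      intro hc
      exact h1 ⟨(k + 1 : ℕ), by rw [zpow_natCast, pow_succ', mul_apply]; exact hc⟩
    have hy : σ ((σ ^ k) a) ≠ y := by
      intro hc
      exact h2 ⟨(k + 1 : ℕ), by rw [zpow_natCast, pow_succ', mul_apply]; exact hc⟩
    exact Equiv.swap_apply_of_ne_of_ne hx hy

lemma toX (σ : Perm α) (x y : α) (h : ¬σ.SameCycle x y) :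
    ∀ k : ℕ, (Equiv.swap x y * σ).SameCycle x ((σ ^ k) x) := by
  intro k
  induction k with
  | zero => simpa using Perm.SameCycle.refl _ _
  | succ k ih =>
    by_cases hc : (σ ^ (k + 1)) x = x
    · rw [hc]
    · obtain ⟨m, hm⟩ := ih
      refine ⟨m + 1, ?_⟩
      rw [add_comm, zpow_add, zpow_one, mul_apply, hm, mul_apply]
      have h1 : σ ((σ ^ k) x) = (σ ^ (k + 1)) x := by rw [pow_succ', mul_apply]
      rw [h1]
      have hy : (σ ^ (k + 1)) x ≠ y := fun hc' =>
        h ⟨(k + 1 : ℕ), by rw [zpow_natCast]; exact hc'⟩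
      exact Equiv.swap_apply_of_ne_of_ne hc hy

lemma xy (σ : Perm α) (x y : α) (h : ¬σ.SameCycle x y) :
    (Equiv.swap x y * σ).SameCycle x y := by
  obtain ⟨j, hj⟩ : ∃ j, orderOf σ = j + 1 :=
    Nat.exists_eq_add_of_lt (orderOf_pos σ) |>.imp fun j hjj => by omega
  have hx : (σ ^ (j + 1)) x = x := by
    rw [← hj, pow_orderOf_eq_one]; rfl
  refine (toX σ x y h j).trans ⟨1, ?_⟩
  rw [zpow_one, mul_apply]
  have h1 : σ ((σ ^ j) x) = (σ ^ (j + 1)) x := by rw [pow_succ', mul_apply]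
  rw [h1, hx, Equiv.swap_apply_left]

lemma toY (σ : Perm α) (x y : α) (h : ¬σ.SameCycle x y) :
    ∀ k : ℕ, (Equiv.swap x y * σ).SameCycle x ((σ ^ k) y) := by
  intro k
  induction k with
  | zero => simpa using xy σ x y h
  | succ k ih =>
    by_cases hc : (σ ^ (k + 1)) y = y
    · rw [hc]; exact xy σ x y h
    · obtain ⟨m, hm⟩ := ih
      refine ⟨m + 1, ?_⟩
      rw [add_comm, zpow_add, zpow_one, mul_apply, hm, mul_apply]
      have h1 : σ ((σ ^ k) y) = (σ ^ (k + 1)) y := by rw [pow_succ', mul_apply]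
      rw [h1]
      have hx : (σ ^ (k + 1)) y ≠ x := fun hc' =>
        h (Perm.SameCycle.symm ⟨(k + 1 : ℕ), by rw [zpow_natCast]; exact hc'⟩)
      exact Equiv.swap_apply_of_ne_of_ne hx hc

/-- Merging: old same-cycle relations survive multiplication by the swap. -/
lemma lift (σ : Perm α) (x y : α) (h : ¬σ.SameCycle x y) {a b : α}
    (hab : σ.SameCycle a b) : (Equiv.swap x y * σ).SameCycle a b := by
  obtain ⟨k, -, hk⟩ := hab.exists_pow_eq'
  by_cases hx : σ.SameCycle x a
  · obtain ⟨j, -, hj⟩ := hx.exists_pow_eq'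
    have h1 := toX σ x y h j
    rw [hj] at h1
    have h2 := toX σ x y h (k + j)
    have : (σ ^ (k + j)) x = b := by
      rw [pow_add, mul_apply, hj, hk]
    rw [this] at h2
    exact h1.symm.trans h2
  · by_cases hy : σ.SameCycle y a
    · obtain ⟨j, -, hj⟩ := hy.exists_pow_eq'
      have h1 := toY σ x y h j
      rw [hj] at h1
      have h2 := toY σ x y h (k + j)
      have : (σ ^ (k + j)) y = b := by
        rw [pow_add, mul_apply, hj, hk]
      rw [this] at h2
      exact h1.symm.trans h2
    · refine ⟨(k : ℕ), ?_⟩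
      rw [zpow_natCast, untouched σ x y a (fun hc => hx hc.symm) (fun hc => hy hc.symm) k, hk]

/-- The merged relation. -/
def R (σ : Perm α) (x y a b : α) : Prop :=
  σ.SameCycle a b ∨ (σ.SameCycle a x ∧ σ.SameCycle b y) ∨ (σ.SameCycle a y ∧ σ.SameCycle b x)

lemma R_trans {σ : Perm α} {x y a b c : α} (h : ¬σ.SameCycle x y)
    (hab : R σ x y a b) (hbc : R σ x y b c) : R σ x y a c := by
  rcases hab with h1 | ⟨h1, h2⟩ | ⟨h1, h2⟩ <;>
    rcases hbc with h3 | ⟨h3, h4⟩ | ⟨h3, h4⟩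
  · exact Or.inl (h1.trans h3)
  · exact Or.inr (Or.inl ⟨h1.trans h3, h4⟩)
  · exact Or.inr (Or.inr ⟨h1.trans h3, h4⟩)
  · exact Or.inr (Or.inl ⟨h1, h3.symm.trans h2⟩)
  · exact absurd (h3.symm.trans h2) h
  · exact Or.inl (h1.trans h4.symm)
  · exact Or.inr (Or.inr ⟨h1, h3.symm.trans h2⟩)
  · exact Or.inl (h1.trans h4.symm)
  · exact absurd (h2.symm.trans h3) h

lemma R_step {σ : Perm α} (x y : α) (c : α) : R σ x y c ((Equiv.swap x y * σ) c) := by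
  by_cases hx : σ c = x
  · have : (Equiv.swap x y * σ) c = y := by rw [mul_apply, hx, Equiv.swap_apply_left]
    rw [this]
    exact Or.inr (Or.inl ⟨⟨1, by rwa [zpow_one]⟩, Perm.SameCycle.refl _ _⟩)
  · by_cases hy : σ c = y
    · have : (Equiv.swap x y * σ) c = x := by rw [mul_apply, hy, Equiv.swap_apply_right]
      rw [this]
      exact Or.inr (Or.inr ⟨⟨1, by rwa [zpow_one]⟩, Perm.SameCycle.refl _ _⟩)
    · have : (Equiv.swap x y * σ) c = σ c := by
        rw [mul_apply, Equiv.swap_apply_of_ne_of_ne hx hy]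
      rw [this]
      exact Or.inl ⟨1, by rw [zpow_one]⟩

/-- Converse: new same-cycle relations come from merged old classes. -/
lemma back (σ : Perm α) (x y : α) (h : ¬σ.SameCycle x y) {a b : α}
    (hab : (Equiv.swap x y * σ).SameCycle a b) : R σ x y a b := by
  obtain ⟨k, -, hk⟩ := hab.exists_pow_eq'
  rw [← hk]
  clear hk
  induction k with
  | zero => exact Or.inl (by simpa using Perm.SameCycle.refl _ _)
  | succ k ih =>
    have h1 : ((Equiv.swap x y * σ) ^ (k + 1)) a
        = (Equiv.swap x y * σ) (((Equiv.swap x y * σ) ^ k) a) := by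
      rw [pow_succ', mul_apply]
    rw [h1]
    exact R_trans h ih (R_step x y _)

lemma sym2Swap_eq {n : ℕ} (x y : Fin n) : sym2Swap s(x, y) = Equiv.swap x y := rfl

variable {n : ℕ}

/-- The ordered product of swaps of the edges listed by `g`. -/
def P (m : ℕ) (g : Fin m → Sym2 (Fin n)) : Equiv.Perm (Fin n) :=
  (List.ofFn fun i => sym2Swap (g i)).reverse.prod

lemma P_succ (m : ℕ) (g : Fin (m + 1) → Sym2 (Fin n)) :
    P (m + 1) g = sym2Swap (g (Fin.last m)) * P m (g ∘ Fin.castSucc) := by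
  unfold P
  rw [List.ofFn_succ']
  rw [show ((List.ofFn fun i : Fin m => sym2Swap (g i.castSucc)).concat
      (sym2Swap (g (Fin.last m)))) =
      (List.ofFn fun i : Fin m => sym2Swap (g i.castSucc)) ++ [sym2Swap (g (Fin.last m))] from
      List.concat_eq_append]
  rw [List.reverse_append, List.reverse_singleton, List.singleton_append, List.prod_cons]
  rfl

lemma P_zero (g : Fin 0 → Sym2 (Fin n)) : P 0 g = 1 := rfl

/-- Invariant: same-cycle relation of the partial product is contained in
reachability of the partial edge graph. -/
lemma inv (t : SimpleGraph (Fin n)) (hac : t.IsAcyclic) :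
    ∀ (m : ℕ) (g : Fin m → Sym2 (Fin n)), Function.Injective g →
      (∀ i, g i ∈ t.edgeSet) →
      ∀ a b : Fin n, (P m g).SameCycle a b →
        (SimpleGraph.fromEdgeSet (Set.range g)).Reachable a b := by
  intro m
  induction m with
  | zero =>
    intro g _ _ a b hab
    rw [P_zero, Perm.sameCycle_one] at hab
    exact hab ▸ SimpleGraph.Reachable.refl a
  | succ m ih =>
    intro g hinj hedge a b hab
    obtain ⟨x, y, hxy⟩ : ∃ x y : Fin n, g (Fin.last m) = s(x, y) :=
      Sym2.ind (fun x y => ⟨x, y, rfl⟩) (g (Fin.last m))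
    set g' : Fin m → Sym2 (Fin n) := g ∘ Fin.castSucc with hg'
    have hinj' : Function.Injective g' := hinj.comp (Fin.castSucc_injective m)
    have hedge' : ∀ i, g' i ∈ t.edgeSet := fun i => hedge _
    have hadjt : t.Adj x y := by rw [← SimpleGraph.mem_edgeSet, ← hxy]; exact hedge _
    have hle : SimpleGraph.fromEdgeSet (Set.range g')
        ≤ t \ SimpleGraph.fromEdgeSet {s(x, y)} := by
      intro c d hcd
      rw [SimpleGraph.fromEdgeSet_adj] at hcd
      obtain ⟨⟨i, hi⟩, hne⟩ := hcd
      rw [SimpleGraph.sdiff_adj]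
      refine ⟨by rw [← SimpleGraph.mem_edgeSet, ← hi]; exact hedge' i, ?_⟩
      rw [SimpleGraph.fromEdgeSet_adj]
      rintro ⟨hmem, -⟩
      rw [Set.mem_singleton_iff] at hmem
      have : g' i = g (Fin.last m) := by rw [hi, hmem, hxy]
      exact (Fin.castSucc_lt_last i).ne (hinj this)
    have hbridge : ¬(t \ SimpleGraph.fromEdgeSet {s(x, y)}).Reachable x y :=
      (SimpleGraph.isBridge_iff.mp
        ((SimpleGraph.isAcyclic_iff_forall_adj_isBridge.mp hac) hadjt))
    have hns : ¬(P m g').SameCycle x y := fun hc =>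
      hbridge ((ih g' hinj' hedge' x y hc).mono hle)
    rw [P_succ, hxy, sym2Swap_eq] at hab
    have hR := back (P m g') x y hns hab
    have hmono : SimpleGraph.fromEdgeSet (Set.range g')
        ≤ SimpleGraph.fromEdgeSet (Set.range g) :=
      SimpleGraph.fromEdgeSet_mono (by rw [hg']; exact Set.range_comp_subset_range _ _)
    have hreach : ∀ c d, (P m g').SameCycle c d →
        (SimpleGraph.fromEdgeSet (Set.range g)).Reachable c d :=
      fun c d hcd => (ih g' hinj' hedge' c d hcd).mono hmono
    have hadj : (SimpleGraph.fromEdgeSet (Set.range g)).Adj x y := by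
      rw [SimpleGraph.fromEdgeSet_adj]
      exact ⟨⟨Fin.last m, hxy⟩, hadjt.ne⟩
    rcases hR with h | ⟨h1, h2⟩ | ⟨h1, h2⟩
    · exact hreach a b h
    · exact ((hreach a x h1).trans hadj.reachable).trans (hreach b y h2).symm
    · exact ((hreach a y h1).trans hadj.reachable.symm).trans (hreach b x h2).symm

lemma not_same (t : SimpleGraph (Fin n)) (hac : t.IsAcyclic) {m : ℕ}
    (g : Fin (m + 1) → Sym2 (Fin n)) (hinj : Function.Injective g)
    (hedge : ∀ i, g i ∈ t.edgeSet) {x y : Fin n} (hxy : g (Fin.last m) = s(x, y)) :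
    ¬(P m (g ∘ Fin.castSucc)).SameCycle x y := by
  set g' : Fin m → Sym2 (Fin n) := g ∘ Fin.castSucc with hg'
  have hinj' : Function.Injective g' := hinj.comp (Fin.castSucc_injective m)
  have hedge' : ∀ i, g' i ∈ t.edgeSet := fun i => hedge _
  have hadjt : t.Adj x y := by rw [← SimpleGraph.mem_edgeSet, ← hxy]; exact hedge _
  have hle : SimpleGraph.fromEdgeSet (Set.range g')
      ≤ t \ SimpleGraph.fromEdgeSet {s(x, y)} := by
    intro c d hcd
    rw [SimpleGraph.fromEdgeSet_adj] at hcd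
    obtain ⟨⟨i, hi⟩, hne⟩ := hcd
    rw [SimpleGraph.sdiff_adj]
    refine ⟨by rw [← SimpleGraph.mem_edgeSet, ← hi]; exact hedge' i, ?_⟩
    rw [SimpleGraph.fromEdgeSet_adj]
    rintro ⟨hmem, -⟩
    rw [Set.mem_singleton_iff] at hmem
    have : g' i = g (Fin.last m) := by rw [hi, hmem, hxy]
    exact (Fin.castSucc_lt_last i).ne (hinj this)
  have hbridge : ¬(t \ SimpleGraph.fromEdgeSet {s(x, y)}).Reachable x y :=
    (SimpleGraph.isBridge_iff.mp
      ((SimpleGraph.isAcyclic_iff_forall_adj_isBridge.mp hac) hadjt))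
  exact fun hc => hbridge ((inv t hac m g' hinj' hedge' x y hc).mono hle)

/-- Each edge's endpoints are in the same cycle of the full product. -/
lemma memXY (t : SimpleGraph (Fin n)) (hac : t.IsAcyclic) :
    ∀ (m : ℕ) (g : Fin m → Sym2 (Fin n)), Function.Injective g →
      (∀ i, g i ∈ t.edgeSet) →
      ∀ (i : Fin m) (x y : Fin n), g i = s(x, y) → (P m g).SameCycle x y := by
  intro m
  induction m with
  | zero => exact fun g _ _ i => i.elim0
  | succ m ih =>
    intro g hinj hedge i x y hixy
    obtain ⟨x₀, y₀, hxy0⟩ : ∃ x y : Fin n, g (Fin.last m) = s(x, y) :=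
      Sym2.ind (fun x y => ⟨x, y, rfl⟩) (g (Fin.last m))
    have hns := not_same t hac g hinj hedge hxy0
    rw [P_succ, hxy0, sym2Swap_eq]
    by_cases hi : i = Fin.last m
    · subst hi
      rw [hixy] at hxy0
      rw [Sym2.eq_iff] at hxy0
      rcases hxy0 with ⟨rfl, rfl⟩ | ⟨rfl, rfl⟩
      · exact xy _ _ _ hns
      · exact (xy _ _ _ hns).symm
    · obtain ⟨j, hj⟩ := Fin.exists_castSucc_eq.mpr hi
      have hIH := ih (g ∘ Fin.castSucc) (hinj.comp (Fin.castSucc_injective m))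
        (fun k => hedge _) j x y (by simp only [Function.comp_apply, hj]; exact hixy)
      exact lift _ _ _ hns hIH

end TreeCycleAux

open TreeCycleAux in
/-- For a labeled tree `t` on `{1,…,n}`, the product of the transpositions corresponding to
the edges of `t`, taken in **any** order (encoded by an arbitrary injective enumeration `f` of
the edges of `t`), is an `n`-cycle. -/
theorem tree_product_isNCycle (n : ℕ) (hn : 2 ≤ n) (t : SimpleGraph (Fin n)) (ht : t.IsTree)
    (f : Fin (n - 1) → Sym2 (Fin n)) (hinj : Function.Injective f)
    (hrange : ∀ e, e ∈ t.edgeSet ↔ ∃ i, f i = e) :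
    IsNCycle (prodRev fun i => sym2Swap (f i)) := by
  have hedge : ∀ i, f i ∈ t.edgeSet := fun i => (hrange (f i)).mpr ⟨i, rfl⟩
  set σ : Equiv.Perm (Fin n) := prodRev fun i => sym2Swap (f i) with hσ
  have hσP : σ = P (n - 1) f := rfl
  -- every two vertices lie in the same cycle
  have key : ∀ {u v : Fin n}, t.Adj u v → σ.SameCycle u v := by
    intro u v h
    obtain ⟨i, hi⟩ := (hrange s(u, v)).mp (t.mem_edgeSet.mpr h)
    rw [hσP]
    exact memXY t ht.2 (n - 1) f hinj hedge i u v hi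
  have hall : ∀ a b : Fin n, σ.SameCycle a b := by
    intro a b
    obtain ⟨w⟩ := ht.isConnected.preconnected a b
    induction w with
    | nil => exact Equiv.Perm.SameCycle.refl _ _
    | cons h p ihp => exact (key h).trans ihp
  have hnt : Nontrivial (Fin n) := Fin.nontrivial_iff_two_le.mpr hn
  have hfix : ∀ z : Fin n, σ z ≠ z := by
    intro z hz
    obtain ⟨w, hw⟩ := exists_ne z
    obtain ⟨k, hk⟩ := hall z w
    exact hw (by rw [← hk, (Function.IsFixedPt.perm_zpow hz k : _)])
  have h0 : (0 : ℕ) < n := by omega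
  constructor
  · exact ⟨⟨0, h0⟩, hfix _, fun y _ => hall _ y⟩
  · exact Finset.eq_univ_iff_forall.mpr fun z => Equiv.Perm.mem_support.mpr (hfix z)
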